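/- The general compatible Killing tensor of the Calogero–Moser system admits the rotational symmetry V = (y−z, z−x, x−y): with K₁, K₂, K₃, K₄ as given and K = a₁ I₃ + α₁ K₁ + b₃₂ K₂ + c₃ K₃ + γ₃ K₄ for arbitrary real a₁, α₁, b₃₂, c₃, γ₃, the Lie derivative of K along V vanishes identically on ℝ³: Σ_k V^k ∂_k K^{ij} − Σ_k K^{kj} ∂_k V^i − Σ_k K^{ik} ∂_k V^j = 0 for all i, j ∈ {1,2,3}. Moreover V is a rotational Killing vector: writing V(x) = A + x × C with A = 0 and C = (−1, −1, −1)/1, one has ⟨C,C⟩ ≠ 0 and ⟨A,C⟩ = 0. -/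

import Mathlib

open Matrix

/-- 3×3 real matrices. -/
abbrev M3 := Matrix (Fin 3) (Fin 3) ℝ

/-- Partial derivative `∂_k f` at `x`. -/
noncomputable def pder (k : Fin 3) (f : (Fin 3 → ℝ) → ℝ) (x : Fin 3 → ℝ) : ℝ :=
  fderiv ℝ f x (Pi.single k 1)

/-- The Killing tensor `K₁`. -/
def CM1 : M3 := !![0, 1, 1; 1, 0, 1; 1, 1, 0]

/-- The Killing tensor `K₂`. -/
def CM2 (p : Fin 3 → ℝ) : M3 :=
  !![2 * p 1 + 2 * p 2, -p 0 - p 1, -p 2 - p 0;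
     -p 0 - p 1, 2 * p 2 + 2 * p 0, -p 1 - p 2;
     -p 2 - p 0, -p 1 - p 2, 2 * p 0 + 2 * p 1]

/-- The Killing tensor `K₃`. -/
def CM3 (p : Fin 3 → ℝ) : M3 :=
  !![(p 1) ^ 2 + (p 2) ^ 2, -p 0 * p 1, -p 2 * p 0;
     -p 0 * p 1, (p 2) ^ 2 + (p 0) ^ 2, -p 1 * p 2;
     -p 2 * p 0, -p 1 * p 2, (p 0) ^ 2 + (p 1) ^ 2]

/-- The Killing tensor `K₄`. -/
def CM4 (p : Fin 3 → ℝ) : M3 :=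
  !![-2 * p 1 * p 2, (p 0 + p 1 - p 2) * p 2, (p 2 + p 0 - p 1) * p 1;
     (p 0 + p 1 - p 2) * p 2, -2 * p 2 * p 0, (p 2 + p 1 - p 0) * p 0;
     (p 2 + p 0 - p 1) * p 1, (p 2 + p 1 - p 0) * p 0, -2 * p 0 * p 1]

/-- The linear combination `K = a₁ g + α₁ K₁ + b₃₂ K₂ + c₃ K₃ + γ₃ K₄`. -/
def Kcm (a₁ α₁ b₃₂ c₃ γ₃ : ℝ) (p : Fin 3 → ℝ) : M3 :=
  a₁ • (1 : M3) + α₁ • CM1 + b₃₂ • CM2 p + c₃ • CM3 p + γ₃ • CM4 p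

/-- The vector field `V = (y−z, z−x, x−y)`. -/
def VCM (p : Fin 3 → ℝ) : Fin 3 → ℝ := ![p 1 - p 2, p 2 - p 0, p 0 - p 1]

lemma fderiv_coord (m : Fin 3) (x : Fin 3 → ℝ) :
    fderiv ℝ (fun y : Fin 3 → ℝ => y m) x = ContinuousLinearMap.proj m :=
  (ContinuousLinearMap.proj m : (Fin 3 → ℝ) →L[ℝ] ℝ).fderiv

set_option maxHeartbeats 4000000 in
/-- STATEMENT 19: the Lie derivative of the general compatible Killing tensor of
the Calogero–Moser system along `V = (y−z, z−x, x−y)` vanishes identically, and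
`V` is a rotational Killing vector: `V(x) = A + (−1,−1,−1) × x` (i.e. of the form
`A + x × C` with `A = 0` and `C` the cross-product vector `(−1,−1,−1)`), whose
fundamental invariants satisfy `⟨C,C⟩ ≠ 0` and `⟨A,C⟩ = 0`. -/
theorem calogero_moser_rotational_symmetry (a₁ α₁ b₃₂ c₃ γ₃ : ℝ) :
    (∀ (x : Fin 3 → ℝ) (i j : Fin 3),
      (∑ k : Fin 3, VCM x k * pder k (fun y => Kcm a₁ α₁ b₃₂ c₃ γ₃ y i j) x)
        - (∑ k : Fin 3, Kcm a₁ α₁ b₃₂ c₃ γ₃ x k j * pder k (fun y => VCM y i) x)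
        - (∑ k : Fin 3, Kcm a₁ α₁ b₃₂ c₃ γ₃ x i k * pder k (fun y => VCM y j) x)
        = 0) ∧
    (∀ x : Fin 3 → ℝ,
      VCM x = (0 : Fin 3 → ℝ) + crossProduct ![(-1 : ℝ), -1, -1] x) ∧
    ![(-1 : ℝ), -1, -1] ⬝ᵥ ![(-1 : ℝ), -1, -1] ≠ 0 ∧
    (0 : Fin 3 → ℝ) ⬝ᵥ ![(-1 : ℝ), -1, -1] = 0 := by
  refine ⟨?_, ?_, by norm_num [dotProduct, Fin.sum_univ_three, Matrix.cons_val_two], by simp [dotProduct]⟩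
  · intro x i j
    fin_cases i <;> fin_cases j <;>
      · simp (disch := fun_prop) [pder, Kcm, CM1, CM2, CM3, CM4, VCM, Fin.sum_univ_three,
          Matrix.add_apply, Matrix.smul_apply, Matrix.one_apply, Matrix.vecHead, Matrix.vecTail,
          pow_two, fderiv_add, fderiv_mul, fderiv_sub, fderiv_neg, fderiv_fun_add, fderiv_fun_mul, fderiv_fun_sub, fderiv_fun_neg, fderiv_const, fderiv_coord,
          Pi.single_apply]
        try ring
  · intro x
    funext i
    fin_cases i <;> simp [VCM, crossProduct] <;> ring
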